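/- (Linear convergence under dual relative strong convexity) In addition to the hypotheses guaranteeing the descent lemma (f essentially smooth convex minimized at x_min, k Legendre convex uniquely minimized at 0, ∇f(int(dom f)) ⊆ int(dom k), D_k(∇f(y),∇f(x)) ≤ L*·D_f(x,y)), assume f is Legendre convex and there exists μ* > 0 with μ*·D_f(x, y) ≤ D_k(∇f(y), ∇f(x)) for all x, y ∈ int(dom f). Then for all i > 0 the iterates of dual preconditioned gradient descent satisfy f(x_i) − f(x_min) ≤ (1 − μ*/L*)^i · (f(x₀) − f(x_min)). -/

import Mathlib

open Filter Topology RealInnerProductSpace Classical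

noncomputable section

abbrev E (d : ℕ) := EuclideanSpace ℝ (Fin d)

def IsEssentiallySmooth {d : ℕ} (f : E d → ℝ) (S : Set (E d)) (f' : E d → E d) : Prop :=
  (interior S).Nonempty ∧
  (∀ x ∈ interior S, HasGradientAt f (f' x) x) ∧
  ∀ (u : ℕ → E d) (y : E d), (∀ n, u n ∈ interior S) → y ∈ frontier S →
    Tendsto u atTop (𝓝 y) → Tendsto (fun n => ‖f' (u n)‖) atTop atTop

def IsProperClosedConvexOn {d : ℕ} (f : E d → ℝ) (S : Set (E d)) : Prop :=
  S.Nonempty ∧ ConvexOn ℝ S f ∧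
  IsClosed {p : E d × ℝ | p.1 ∈ S ∧ f p.1 ≤ p.2}

def IsLegendre {d : ℕ} (f : E d → ℝ) (S : Set (E d)) (f' : E d → E d) : Prop :=
  IsProperClosedConvexOn f S ∧ IsEssentiallySmooth f S f' ∧
  StrictConvexOn ℝ (interior S) f

/-- The (classical) Bregman divergence `D_f(x, y) = f(x) - f(y) - ⟪∇f(y), x - y⟫`. -/
def Breg {d : ℕ} (f : E d → ℝ) (f' : E d → E d) (x y : E d) : ℝ :=
  f x - f y - ⟪f' y, x - y⟫

open Set

lemma grad_ineq {d : ℕ} {f : E d → ℝ} {S : Set (E d)} (hconv : ConvexOn ℝ S f)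
    {z g y : E d} (hz : z ∈ S) (hg : HasGradientAt f g z) (hy : y ∈ S) :
    f z + ⟪g, y - z⟫ ≤ f y := by
  have hc : HasDerivAt (fun t : ℝ => z + t • (y - z)) (y - z) 0 := by
    simpa using ((hasDerivAt_id (0 : ℝ)).smul_const (y - z)).const_add z
  have hderiv : HasDerivAt (fun t : ℝ => f (z + t • (y - z))) ⟪g, y - z⟫ 0 := by
    have hl : HasFDerivAt f (InnerProductSpace.toDual ℝ (E d) g)
        ((fun t : ℝ => z + t • (y - z)) 0) := by
      simpa using hasGradientAt_iff_hasFDerivAt.mp hg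
    have h2 := hl.comp_hasDerivAt 0 hc
    simp only [InnerProductSpace.toDual_apply_apply] at h2
    exact h2
  have hslope : ∀ᶠ t in 𝓝[>] (0 : ℝ),
      slope (fun t : ℝ => f (z + t • (y - z))) 0 t ≤ f y - f z := by
    filter_upwards [Ioc_mem_nhdsGT one_pos] with t ht
    have hco : f ((1 - t) • z + t • y) ≤ (1 - t) * f z + t * f y :=
      hconv.2 hz hy (by linarith [ht.2]) ht.1.le (by ring)
    have hpt : (1 - t) • z + t • y = z + t • (y - z) := by module
    rw [hpt] at hco
    rw [slope_def_field]
    simp only [zero_smul, add_zero, sub_zero]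
    rw [div_le_iff₀ ht.1]
    nlinarith [hco]
  have hmono : 𝓝[>] (0 : ℝ) ≤ 𝓝[≠] (0 : ℝ) :=
    nhdsWithin_mono _ (fun x hx => ne_of_gt hx)
  have hle : ⟪g, y - z⟫ ≤ f y - f z :=
    le_of_tendsto ((hasDerivAt_iff_tendsto_slope.mp hderiv).mono_left hmono) hslope
  linarith

lemma min_mem_interior {d : ℕ} {f : E d → ℝ} {S : Set (E d)} {f' : E d → E d}
    (hconv : ConvexOn ℝ S f) (hsm : IsEssentiallySmooth f S f')
    {w : E d} (hw : w ∈ S) (hmin : ∀ y ∈ S, f w ≤ f y) : w ∈ interior S := by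
  by_contra hwi
  obtain ⟨x0, hx0⟩ := hsm.1
  obtain ⟨r0, hr0, hball0⟩ := Metric.isOpen_iff.mp isOpen_interior x0 hx0
  set r := r0 / 2 with hrdef
  have hr : 0 < r := by positivity
  have hball : Metric.closedBall x0 r ⊆ interior S :=
    (Metric.closedBall_subset_ball (by linarith)).trans hball0
  have hcont : ContinuousOn f (Metric.closedBall x0 r) :=
    ((hconv.subset interior_subset hconv.1.interior).continuousOn isOpen_interior).mono hball
  obtain ⟨vm, hvm, hMax⟩ := (isCompact_closedBall x0 r).exists_isMaxOn
    ⟨x0, Metric.mem_closedBall_self hr.le⟩ hcont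
  set M := f vm with hMdef
  have hMw : f w ≤ M := hmin vm (interior_subset (hball hvm))
  -- the sequence approaching w
  set t : ℕ → ℝ := fun n => 1 / (n + 1 : ℝ) with htdef
  have ht01 : ∀ n : ℕ, 0 < t n ∧ t n ≤ 1 := by
    intro n
    constructor
    · positivity
    · rw [div_le_one (by positivity)]
      have : (0:ℝ) ≤ (n:ℝ) := Nat.cast_nonneg n
      linarith
  set u : ℕ → E d := fun n => w + t n • (x0 - w) with hudef
  have hu_int : ∀ n, u n ∈ interior S := by
    intro n
    have h := hconv.1.combo_interior_closure_mem_interior (a := t n) (b := 1 - t n)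
      hx0 (subset_closure hw) (ht01 n).1 (by linarith [(ht01 n).2]) (by ring)
    have he : u n = t n • x0 + (1 - t n) • w := by rw [hudef]; module
    rw [he]; exact h
  have hu_tendsto : Tendsto u atTop (𝓝 w) := by
    have h1 : Tendsto t atTop (𝓝 0) := tendsto_one_div_add_atTop_nhds_zero_nat
    have h2 : Tendsto u atTop (𝓝 (w + (0 : ℝ) • (x0 - w))) :=
      tendsto_const_nhds.add (h1.smul_const _)
    simpa using h2
  have hfr : w ∈ frontier S := ⟨subset_closure hw, hwi⟩
  have hblow := hsm.2.2 u w hu_int hfr hu_tendsto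
  -- uniform bound on gradients
  have hbdd : ∀ n, ‖f' (u n)‖ ≤ (M - f w) / r := by
    intro n
    set g := f' (u n) with hgdef
    have hgrad := hsm.2.1 (u n) (hu_int n)
    rcases eq_or_ne g 0 with h0 | h0
    · rw [h0]; simp
      exact div_nonneg (by linarith) hr.le
    · have hgne : ‖g‖ ≠ 0 := norm_ne_zero_iff.mpr h0
      have hnorm : ‖(r / ‖g‖) • g‖ = r := by
        rw [norm_smul, Real.norm_eq_abs, abs_of_pos (by positivity),
          div_mul_cancel₀ _ hgne]
      have hvball : x0 + (r / ‖g‖) • g ∈ Metric.closedBall x0 r := by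
        rw [Metric.mem_closedBall, dist_eq_norm, add_sub_cancel_left, hnorm]
      have hv : x0 + (r / ‖g‖) • g ∈ S := interior_subset (hball hvball)
      -- first: ⟪g, w - x0⟫ ≤ 0
      have key1 := grad_ineq hconv (interior_subset (hu_int n)) hgrad hw
      have hwu : w - u n = t n • (w - x0) := by rw [hudef]; module
      have h1 : t n * ⟪g, w - x0⟫ ≤ 0 := by
        rw [hwu, real_inner_smul_right] at key1
        have := hmin (u n) (interior_subset (hu_int n))
        linarith
      have h1' : ⟪g, w - x0⟫ ≤ 0 := nonpos_of_mul_nonpos_right h1 (ht01 n).1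
      -- second: main bound
      have key2 := grad_ineq hconv (interior_subset (hu_int n)) hgrad hv
      have hxu : x0 + (r / ‖g‖) • g - u n = (r / ‖g‖) • g + (1 - t n) • (x0 - w) := by
        rw [hudef]; module
      rw [hxu] at key2
      have hMv : f (x0 + (r / ‖g‖) • g) ≤ M := hMax hvball
      have hfu : f w ≤ f (u n) := hmin (u n) (interior_subset (hu_int n))
      have hinner : ⟪g, (r / ‖g‖) • g + (1 - t n) • (x0 - w)⟫
          = r / ‖g‖ * ⟪g, g⟫ + (1 - t n) * (-⟪g, w - x0⟫) := by
        rw [inner_add_right, real_inner_smul_right, real_inner_smul_right]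
        rw [show (x0 - w) = -(w - x0) from (neg_sub w x0).symm, inner_neg_right]
      have hgg : ⟪g, g⟫ = ‖g‖ ^ 2 := real_inner_self_eq_norm_sq g
      have hrg : r / ‖g‖ * ⟪g, g⟫ = r * ‖g‖ := by
        rw [hgg, pow_two, ← mul_assoc, div_mul_cancel₀ _ hgne]
      have h1t : (0:ℝ) ≤ 1 - t n := by linarith [(ht01 n).2]
      have : r * ‖g‖ ≤ M - f w := by
        rw [hinner, hrg] at key2
        nlinarith [mul_nonneg h1t (neg_nonneg.mpr h1')]
      rw [le_div_iff₀ hr]; linarith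
  obtain ⟨n, hn1, hn2⟩ := ((hblow.eventually (eventually_gt_atTop ((M - f w) / r))).and
    (eventually_ge_atTop 0)).exists
  exact absurd (hbdd n) (not_le.mpr hn1)

lemma sublevel_bdd {d : ℕ} {k : E d → ℝ} {Sk : Set (E d)} (hconv : ConvexOn ℝ Sk k)
    (h0 : (0 : E d) ∈ interior Sk) (hk0min : ∀ y ∈ Sk, y ≠ 0 → k 0 < k y) (C : ℝ) :
    ∃ R : ℝ, ∀ q ∈ Sk, k q ≤ C → ‖q‖ ≤ R := by
  obtain ⟨ρ0, hρ0, hball0⟩ := Metric.isOpen_iff.mp isOpen_interior 0 h0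
  set ρ := ρ0 / 2 with hρdef
  have hρ : 0 < ρ := by positivity
  have hball : Metric.closedBall (0 : E d) ρ ⊆ interior Sk :=
    (Metric.closedBall_subset_ball (by linarith)).trans hball0
  have hnorm_smul : ∀ q : E d, ρ < ‖q‖ → (ρ / ‖q‖) • q ∈ Metric.sphere (0 : E d) ρ := by
    intro q hq
    have hqne : ‖q‖ ≠ 0 := (hρ.trans hq).ne'
    rw [Metric.mem_sphere, dist_zero_right, norm_smul, Real.norm_eq_abs,
      abs_of_pos (by positivity), div_mul_cancel₀ _ hqne]
  by_cases hsp : (Metric.sphere (0 : E d) ρ).Nonempty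
  · have hcont : ContinuousOn k (Metric.sphere (0 : E d) ρ) :=
      (((hconv.subset interior_subset hconv.1.interior).continuousOn isOpen_interior).mono
        (Metric.sphere_subset_closedBall.trans hball))
    obtain ⟨w0, hw0, hMin⟩ := (isCompact_sphere (0 : E d) ρ).exists_isMinOn hsp hcont
    have hw0S : w0 ∈ Sk := interior_subset (hball (Metric.sphere_subset_closedBall hw0))
    have hw0norm : ‖w0‖ = ρ := by simpa [dist_zero_right] using hw0
    have hw0ne : w0 ≠ 0 := by
      intro h; rw [h, norm_zero] at hw0norm; exact hρ.ne hw0norm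
    set m := k w0 with hmdef
    have hm : k 0 < m := hk0min w0 hw0S hw0ne
    refine ⟨max ρ (ρ * (C - k 0) / (m - k 0)), ?_⟩
    intro q hq hkq
    by_cases hqρ : ‖q‖ ≤ ρ
    · exact hqρ.trans (le_max_left _ _)
    push_neg at hqρ
    have hq0 : (0 : ℝ) < ‖q‖ := hρ.trans hqρ
    set tq := ρ / ‖q‖ with htqdef
    have htq0 : 0 < tq := by positivity
    have htq1 : tq < 1 := (div_lt_one hq0).mpr hqρ
    have hmemsp : tq • q ∈ Metric.sphere (0 : E d) ρ := hnorm_smul q hqρ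
    have hcomb : k ((1 - tq) • (0 : E d) + tq • q) ≤ (1 - tq) * k 0 + tq * k q :=
      hconv.2 (interior_subset h0) hq (by linarith) htq0.le (by ring)
    have hcomb' : k (tq • q) ≤ (1 - tq) * k 0 + tq * k q := by
      simpa using hcomb
    have hmle : m ≤ k (tq • q) := hMin hmemsp
    have htqq : tq * ‖q‖ = ρ := div_mul_cancel₀ _ hq0.ne'
    have h1 : ‖q‖ * (m - k 0) ≤ ρ * (C - k 0) := by
      have hstep : m - k 0 ≤ tq * (C - k 0) := by nlinarith
      have h2 := mul_le_mul_of_nonneg_left hstep hq0.le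
      nlinarith [h2, htqq]
    have h2 : ‖q‖ ≤ ρ * (C - k 0) / (m - k 0) := (le_div_iff₀ (by linarith)).mpr h1
    exact h2.trans (le_max_right _ _)
  · refine ⟨ρ, fun q hq _ => ?_⟩
    by_contra h
    push_neg at h
    exact hsp ⟨_, hnorm_smul q h⟩


set_option maxHeartbeats 2000000 in
lemma step_lemma {d : ℕ} {f k : E d → ℝ} {Sf Sk : Set (E d)} {f' k' : E d → E d}
    (hfc : ConvexOn ℝ Sf f) (hfsm : IsEssentiallySmooth f Sf f')
    (hkc : ConvexOn ℝ Sk k)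
    (hk0 : (0 : E d) ∈ Sk) (hk0le : ∀ y ∈ Sk, k 0 ≤ k y)
    (hk0min : ∀ y ∈ Sk, y ≠ 0 → k 0 < k y) (hk0int : (0 : E d) ∈ interior Sk)
    (hkgrad : ∀ p ∈ interior Sk, HasGradientAt k (k' p) p)
    {L : ℝ} (hL : 0 < L)
    (hincl : ∀ x ∈ interior Sf, f' x ∈ interior Sk)
    (hrel : ∀ x ∈ interior Sf, ∀ y ∈ interior Sf,
      Breg k k' (f' y) (f' x) ≤ L * Breg f f' x y)
    {xmin : E d} (hxmin : xmin ∈ Sf) (hmin : ∀ y ∈ Sf, f xmin ≤ f y)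
    {z : E d} (hz : z ∈ interior Sf) :
    z - (1 / L) • k' (f' z) ∈ interior Sf ∧
      f (z - (1 / L) • k' (f' z)) ≤ f z - (1 / L) * Breg k k' 0 (f' z) := by
  set p := f' z with hpdef
  set c := k' p with hcdef
  set γ : ℝ → E d := fun s => z - s • ((1 / L) • c) with hγdef
  have hγ1 : γ 1 = z - (1 / L) • c := by simp [hγdef]
  have hγ0 : γ 0 = z := by simp [hγdef]
  have hγcont : Continuous γ := continuous_const.sub (continuous_id.smul continuous_const)
  set D0 := Breg k k' 0 p with hD0def
  have hpint : p ∈ interior Sk := hincl z hz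
  have hD0 : 0 ≤ D0 := by
    have h := grad_ineq hkc (interior_subset hpint) (hkgrad p hpint) hk0
    simp only [hD0def, Breg]
    linarith
  have hfz : f xmin ≤ f z := hmin z (interior_subset hz)
  -- the key descent computations at a point of the segment
  have hfacts : ∀ s : ℝ, 0 ≤ s → s ≤ 1 → γ s ∈ interior Sf →
      k (f' (γ s)) - k 0 + D0 + L * (f (γ s) - f z) ≤ (1 - s) * ⟪f' (γ s), c⟫ ∧
      L * (f (γ s) - f z) ≤ -(s * ⟪f' (γ s), c⟫) := by
    intro s hs0 hs1 hsint
    set q := f' (γ s) with hqdef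
    set u := ⟪q, c⟫ with hudef
    have hqSk : q ∈ Sk := interior_subset (hincl _ hsint)
    have hgradγ := hfsm.2.1 _ hsint
    have hzγ : z - γ s = (s / L) • c := by
      show z - (z - s • ((1 / L) • c)) = (s / L) • c
      rw [smul_smul]
      module
    have hLs : L * (s / L * u) = s * u := by field_simp
    -- gradient inequality at γ s against z, multiplied by L
    have h1 : L * (f (γ s) - f z) ≤ -(s * u) := by
      have h := grad_ineq hfc (interior_subset hsint) hgradγ (interior_subset hz)
      rw [hzγ, real_inner_smul_right] at h
      have hmul := mul_le_mul_of_nonneg_left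
        (show f (γ s) - f z ≤ -(s / L * u) from by linarith) hL.le
      rw [mul_neg, hLs] at hmul
      exact hmul
    refine ⟨?_, h1⟩
    -- algebraic identity
    have id1 : u = k q - k 0 + D0 - Breg k k' q p := by
      simp only [hudef, hD0def, Breg, hcdef]
      rw [inner_sub_right, inner_sub_right, inner_zero_right]
      rw [real_inner_comm q (k' p)]
      ring
    -- relative smoothness
    have hsmooth := hrel z hz (γ s) hsint
    have hBf : Breg f f' z (γ s) = f z - f (γ s) - s / L * u := by
      simp only [Breg]
      rw [hzγ, real_inner_smul_right]
    rw [hBf] at hsmooth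
    have hdist : L * (f z - f (γ s) - s / L * u) = L * (f z - f (γ s)) - s * u := by
      field_simp
    rw [hdist] at hsmooth
    nlinarith [hsmooth, id1]
  -- every point of the segment stays in the interior
  have hallgood : ∀ s ∈ Icc (0 : ℝ) 1, γ s ∈ interior Sf := by
    by_contra hcon
    push_neg at hcon
    obtain ⟨s0, hs0Icc, hs0bad⟩ := hcon
    set A : Set ℝ := Icc (0 : ℝ) 1 ∩ γ ⁻¹' (interior Sf)ᶜ with hAdef
    have hAne : A.Nonempty := ⟨s0, hs0Icc, hs0bad⟩
    have hAclosed : IsClosed A :=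
      isClosed_Icc.inter ((isOpen_interior.preimage hγcont).isClosed_compl)
    have hbddA : BddBelow A := ⟨0, fun s hs => hs.1.1⟩
    set T := sInf A with hTdef
    have hTA : T ∈ A := hAclosed.csInf_mem hAne hbddA
    have hT1 : T ≤ 1 := hTA.1.2
    have hT0 : 0 < T := by
      rcases eq_or_lt_of_le hTA.1.1 with h | h
      · exfalso
        apply hTA.2
        show γ T ∈ interior Sf
        rw [← h, hγ0]
        exact hz
      · exact h
    set s : ℕ → ℝ := fun n => T - T / ((n : ℝ) + 2) with hsdef
    have hs_lb : ∀ n : ℕ, T / 2 ≤ s n := by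
      intro n
      have h2 : (2 : ℝ) ≤ (n : ℝ) + 2 := by
        have : (0:ℝ) ≤ (n:ℝ) := Nat.cast_nonneg n
        linarith
      have := div_le_div_of_nonneg_left (le_of_lt hT0) (by norm_num : (0:ℝ) < 2) h2
      simp only [hsdef]
      linarith
    have hs_lt : ∀ n : ℕ, s n < T := by
      intro n
      have hpos : 0 < T / ((n : ℝ) + 2) := by positivity
      simp only [hsdef]
      linarith
    have hs_Icc : ∀ n : ℕ, s n ∈ Icc (0 : ℝ) 1 :=
      fun n => ⟨le_trans (by positivity) (hs_lb n), le_of_lt (lt_of_lt_of_le (hs_lt n) hT1)⟩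
    have hs_int : ∀ n : ℕ, γ (s n) ∈ interior Sf := by
      intro n
      by_contra hbad
      exact absurd (csInf_le hbddA (⟨hs_Icc n, hbad⟩ : s n ∈ A)) (not_le.mpr (hs_lt n))
    have hs_tendsto : Tendsto s atTop (𝓝 T) := by
      have h1 : Tendsto (fun n : ℕ => T / ((n : ℝ) + 2)) atTop (𝓝 0) :=
        tendsto_const_nhds.div_atTop
          (tendsto_atTop_add_const_right atTop 2 tendsto_natCast_atTop_atTop)
      have h2 : Tendsto (fun n : ℕ => T - T / ((n : ℝ) + 2)) atTop (𝓝 (T - 0)) :=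
        (tendsto_const_nhds (x := T)).sub h1
      simpa using h2
    have hγs_tendsto : Tendsto (fun n => γ (s n)) atTop (𝓝 (γ T)) :=
      (hγcont.tendsto T).comp hs_tendsto
    have hfr : γ T ∈ frontier Sf := by
      constructor
      · exact mem_closure_of_tendsto hγs_tendsto
          (Eventually.of_forall fun n => interior_subset (hs_int n))
      · exact hTA.2
    have hblow := hfsm.2.2 (fun n => γ (s n)) (γ T) hs_int hfr hγs_tendsto
    clear hγdef hsdef hAdef hTdef hγ1 hγ0
    clear_value γ s T A
    -- uniform bound on k of the gradients along the sequence
    have hbound : ∀ n, k (f' (γ (s n))) ≤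
        k 0 + 2 * L * (f z - f xmin) / T + L * (f z - f xmin) := by
      intro n
      obtain ⟨KEY, KEY2⟩ := hfacts (s n) (le_trans (by positivity) (hs_lb n))
        (hs_Icc n).2 (hs_int n)
      have hγmin : f xmin ≤ f (γ (s n)) := hmin _ (interior_subset (hs_int n))
      have hB : (0:ℝ) ≤ f z - f xmin := by linarith
      have hsn0 : (0:ℝ) ≤ s n := le_trans (by positivity) (hs_lb n)
      have hsn1 : s n ≤ 1 := (hs_Icc n).2
      set u := (⟪f' (γ (s n)), c⟫ : ℝ) with hudef
      clear_value u
      have hLB : L * (-(f z - f xmin)) ≤ L * (f (γ (s n)) - f z) :=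
        mul_le_mul_of_nonneg_left (by linarith) hL.le
      have h1su : (1 - s n) * u ≤ 2 * L * (f z - f xmin) / T := by
        rcases le_or_gt u 0 with hu | hu
        · have h1 : (1 - s n) * u ≤ 0 :=
            mul_nonpos_iff.mpr (Or.inl ⟨by linarith, hu⟩)
          have h2 : (0:ℝ) ≤ 2 * L * (f z - f xmin) / T := by positivity
          exact h1.trans h2
        · have h3 : s n * u ≤ L * (f z - f xmin) := by
            have h4 : L * (f z - f (γ (s n))) ≤ L * (f z - f xmin) :=
              mul_le_mul_of_nonneg_left (by linarith) hL.le
            linarith [KEY2]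
          have h5 : T / 2 * u ≤ s n * u := mul_le_mul_of_nonneg_right (hs_lb n) hu.le
          have h6 : u ≤ 2 * L * (f z - f xmin) / T := by
            rw [le_div_iff₀ hT0]
            nlinarith [h3, h5]
          have h7 : (1 - s n) * u ≤ u := by nlinarith [mul_nonneg hsn0 hu.le]
          linarith
      linarith [KEY, hLB, h1su, hD0]
    obtain ⟨R, hR⟩ := sublevel_bdd hkc hk0int hk0min
      (k 0 + 2 * L * (f z - f xmin) / T + L * (f z - f xmin))
    have hbR : ∀ n, ‖f' (γ (s n))‖ ≤ R := fun n =>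
      hR _ (interior_subset (hincl _ (hs_int n))) (hbound n)
    obtain ⟨n, hn⟩ := (hblow.eventually (eventually_gt_atTop R)).exists
    exact absurd (hbR n) (not_le.mpr hn)
  -- conclusion : apply the computation at s = 1
  have h1int : γ 1 ∈ interior Sf := hallgood 1 ⟨zero_le_one, le_refl 1⟩
  obtain ⟨KEY, _⟩ := hfacts 1 zero_le_one le_rfl h1int
  have hqSk : f' (γ 1) ∈ Sk := interior_subset (hincl _ h1int)
  have hkq : k 0 ≤ k (f' (γ 1)) := hk0le _ hqSk
  have hkey' : L * (f (γ 1) - f z) ≤ -D0 := by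
    have h0 : ((1 : ℝ) - 1) * ⟪f' (γ 1), c⟫ = 0 := by ring
    linarith [KEY, h0.le, h0.ge]
  have hdiv : f (γ 1) - f z ≤ -D0 / L := by
    rw [le_div_iff₀ hL]
    linarith [hkey']
  have hgoal2 : f (γ 1) ≤ f z - 1 / L * D0 := by
    have : -D0 / L = -(1 / L * D0) := by ring
    linarith [hdiv, this.le, this.ge]
  rw [← hγ1]
  exact ⟨h1int, hgoal2⟩

/-- linear convergence: under the descent-lemma assumptions with `f`
additionally Legendre convex (strictly convex on the interior of its domain), minimized at
`xmin`, and dual relative strong convexity `μ*·D_f(x,y) ≤ D_k(∇f(y), ∇f(x))` with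
`0 < μ* ≤ L*`, the iterates satisfy
`f(x_i) - f(xmin) ≤ (1 - μ*/L*)^i (f(x₀) - f(xmin))`. -/
theorem stmt15 {d : ℕ} (f k : E d → ℝ) (Sf Sk : Set (E d)) (f' k' : E d → E d)
    (hf : IsLegendre f Sf f')
    (hk : IsLegendre k Sk k')
    (hk0 : (0 : E d) ∈ Sk) (hk0min : ∀ y ∈ Sk, y ≠ 0 → k 0 < k y)
    (L μ : ℝ) (hμ : 0 < μ) (hμL : μ ≤ L)
    (hincl : ∀ x ∈ interior Sf, f' x ∈ interior Sk)
    (hrel : ∀ x ∈ interior Sf, ∀ y ∈ interior Sf,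
      Breg k k' (f' y) (f' x) ≤ L * Breg f f' x y)
    (hstr : ∀ x ∈ interior Sf, ∀ y ∈ interior Sf,
      μ * Breg f f' x y ≤ Breg k k' (f' y) (f' x))
    (xmin : E d) (hxmin : xmin ∈ Sf) (hmin : ∀ x ∈ Sf, f xmin ≤ f x)
    (x : ℕ → E d) (hx0 : x 0 ∈ interior Sf)
    (hiter : ∀ i : ℕ, x (i + 1) = x i - (1 / L) • k' (f' (x i))) :
    ∀ i : ℕ, 0 < i →
      f (x i) - f xmin ≤ (1 - μ / L) ^ i * (f (x 0) - f xmin) := by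
  obtain ⟨⟨hSfne, hfc, hfcl⟩, hfsm, hfstrict⟩ := hf
  obtain ⟨⟨hSkne, hkc, hkcl⟩, hksm, hkstrict⟩ := hk
  have hL : 0 < L := lt_of_lt_of_le hμ hμL
  have hk0le : ∀ y ∈ Sk, k 0 ≤ k y := by
    intro y hy
    by_cases h : y = 0
    · rw [h]
    · exact (hk0min y hy h).le
  have hk0int : (0 : E d) ∈ interior Sk := min_mem_interior hkc hksm hk0 hk0le
  have hxint : xmin ∈ interior Sf := min_mem_interior hfc hfsm hxmin hmin
  -- gradient of f vanishes at the minimizer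
  have hgrad0 : f' xmin = 0 := by
    have hloc : IsLocalMin f xmin := by
      show ∀ᶠ y in 𝓝 xmin, f xmin ≤ f y
      filter_upwards [isOpen_interior.mem_nhds hxint] with y hy
      exact hmin y (interior_subset hy)
    have h0 := hloc.hasFDerivAt_eq_zero
      (hasGradientAt_iff_hasFDerivAt.mp (hfsm.2.1 xmin hxint))
    have h1 := congrArg (InnerProductSpace.toDual ℝ (E d)).symm h0
    simpa using h1
  -- iterates remain in the interior
  have hstep : ∀ i, x i ∈ interior Sf := by
    intro i
    induction i with
    | zero => exact hx0
    | succ n ih =>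
      rw [hiter n]
      exact (step_lemma hfc hfsm hkc hk0 hk0le hk0min hk0int hksm.2.1 hL hincl hrel
        hxmin hmin ih).1
  have hdesc : ∀ i, f (x (i + 1)) ≤ f (x i) - (1 / L) * Breg k k' 0 (f' (x i)) := by
    intro i
    rw [hiter i]
    exact (step_lemma hfc hfsm hkc hk0 hk0le hk0min hk0int hksm.2.1 hL hincl hrel
      hxmin hmin (hstep i)).2
  have hstrong : ∀ i, μ * (f (x i) - f xmin) ≤ Breg k k' 0 (f' (x i)) := by
    intro i
    have h := hstr (x i) (hstep i) xmin hxint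
    have hBf : Breg f f' (x i) xmin = f (x i) - f xmin := by
      simp [Breg, hgrad0]
    rw [hBf, hgrad0] at h
    exact h
  have hcontr : ∀ i, f (x (i + 1)) - f xmin ≤ (1 - μ / L) * (f (x i) - f xmin) := by
    intro i
    have h1 := hdesc i
    have h2 := hstrong i
    have h3 : (1 / L) * (μ * (f (x i) - f xmin)) ≤ (1 / L) * Breg k k' 0 (f' (x i)) :=
      mul_le_mul_of_nonneg_left h2 (by positivity)
    have h4 : (1 - μ / L) * (f (x i) - f xmin)
        = (f (x i) - f xmin) - (1 / L) * (μ * (f (x i) - f xmin)) := by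
      field_simp
    linarith
  have hfinal : ∀ i, f (x i) - f xmin ≤ (1 - μ / L) ^ i * (f (x 0) - f xmin) := by
    intro i
    induction i with
    | zero => simp
    | succ n ih =>
      have hfactor : (0:ℝ) ≤ 1 - μ / L := by
        rw [sub_nonneg, div_le_one hL]
        exact hμL
      calc f (x (n + 1)) - f xmin ≤ (1 - μ / L) * (f (x n) - f xmin) := hcontr n
        _ ≤ (1 - μ / L) * ((1 - μ / L) ^ n * (f (x 0) - f xmin)) :=
            mul_le_mul_of_nonneg_left ih hfactor
        _ = (1 - μ / L) ^ (n + 1) * (f (x 0) - f xmin) := by ring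
  exact fun i _ => hfinal i
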